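/- Let n ≥ 3 and let κ be a real number with 1 < κ < 1 + 1/(n-2). Then a finite sequence (i_1, …, i_m) of vertices of ZMod n is a legal play from u_κ if and only if it is a (<-1)-play from ρ^(0) (viewed as a real configuration). -/

import Mathlib

/-- The affine Cartan matrix of type `Ã_{n-1}`, indexed by `ZMod n`. -/
def A (n : ℕ) (i j : ZMod n) : ℤ :=
  if i = j then 2 else if j = i + 1 ∨ j = i - 1 then -1 else 0

/-- Firing vertex `i` in type `Ã_{n-1}`. -/
def fire (n : ℕ) (i : ZMod n) (v : ZMod n → ℝ) : ZMod n → ℝ :=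
  fun j => v j - (A n i j : ℝ) * v i

/-- The configuration resulting from firing the vertices in the list `l` successively. -/
def playResult (n : ℕ) : (ZMod n → ℝ) → List (ZMod n) → (ZMod n → ℝ)
  | v, [] => v
  | v, i :: l => playResult n (fire n i v) l

/-- `IsPlay n θ v l` : the list `l` is a sequence of successive firings starting at `v`
in which each fired vertex has amplitude strictly less than `θ` at the time it is fired.
With `θ = 0` this is a legal play; with `θ = -1` a `(<-1)`-play. -/
def IsPlay (n : ℕ) (θ : ℝ) : (ZMod n → ℝ) → List (ZMod n) → Prop
  | _, [] => True
  | v, i :: l => v i < θ ∧ IsPlay n θ (fire n i v) l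

/-- The configuration `ρ^(a)` : value `-(n-1)` at `a` and `1` elsewhere. -/
def rho (n : ℕ) (a : ZMod n) : ZMod n → ℝ :=
  fun j => if j = a then 1 - (n : ℝ) else 1

/-- The extending vertex `ι0`: the class of `n/2` if `n` is even, and `0` if `n` is odd. -/
def iota0 (n : ℕ) : ZMod n :=
  if Even n then ((n / 2 : ℕ) : ZMod n) else 0

/-- The configuration `u_κ = ρ^(0) + κ·e_0`. -/
def ukappa (n : ℕ) (κ : ℝ) : ZMod n → ℝ :=
  fun j => if j = 0 then κ - ((n : ℝ) - 1) else 1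

namespace AffinePlayAux

/-- Rho-side configuration determined by the rank function. -/
noncomputable def rdiff (n : ℕ) (rk : ZMod n → ℤ) : ZMod n → ℝ :=
  fun i => ((rk i - rk (i - 1) : ℤ) : ℝ)

/-- Ukappa-side configuration determined by the state. -/
noncomputable def udiff (n : ℕ) (κ : ℝ) (rk p : ZMod n → ℤ) : ZMod n → ℝ :=
  fun i => ((rk i - rk (i - 1) : ℤ) : ℝ)
    + κ * ((1 - (p i - p (i - 1)) : ℤ) : ℝ) / (n : ℝ)

/-- The invariant maintained along the coupled plays. -/
structure GoodState (n : ℕ) (rk p : ZMod n → ℤ) : Prop where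
  rk_nonneg : ∀ i, 0 ≤ rk i
  rk_le : ∀ i, rk i ≤ (n : ℤ) - 1
  rk_inj : ∀ i j, rk i = rk j → i = j
  rk_surj : ∀ v : ℤ, 0 ≤ v → v ≤ (n : ℤ) - 1 → ∃ i, rk i = v
  p_res : ∀ i, ((p i : ℤ) : ZMod n) = i
  chain : ∀ i j, rk j = rk i + 1 → 1 ≤ p j - p i ∧ p j - p i ≤ (n : ℤ) - 1

variable {n : ℕ}

lemma one_ne_zero' (hn : 3 ≤ n) : (1 : ZMod n) ≠ 0 := by
  intro h
  have h1 : ((1 : ℕ) : ZMod n) = 0 := by exact_mod_cast h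
  have := Nat.le_of_dvd (by norm_num)
    ((ZMod.natCast_eq_zero_iff 1 n).mp h1)
  omega

lemma two_ne_zero' (hn : 3 ≤ n) : (2 : ZMod n) ≠ 0 := by
  intro h
  have h1 : ((2 : ℕ) : ZMod n) = 0 := by exact_mod_cast h
  have := Nat.le_of_dvd (by norm_num)
    ((ZMod.natCast_eq_zero_iff 2 n).mp h1)
  omega

lemma sub_one_ne (hn : 3 ≤ n) (i : ZMod n) : i - 1 ≠ i := by
  intro h
  exact one_ne_zero' hn (by linear_combination -h)

lemma sub_two_ne (hn : 3 ≤ n) (i : ZMod n) : i - 1 - 1 ≠ i := by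
  intro h
  exact two_ne_zero' hn (by linear_combination -h)

lemma add_one_ne (hn : 3 ≤ n) (i : ZMod n) : i + 1 ≠ i := by
  intro h
  exact one_ne_zero' hn (by linear_combination h)

lemma add_one_ne_sub_one (hn : 3 ≤ n) (i : ZMod n) : i + 1 ≠ i - 1 := by
  intro h
  exact two_ne_zero' hn (by linear_combination h)

/-- Telescoping the chain condition. -/
lemma tele (rk p : ZMod n → ℤ) (h : GoodState n rk p) :
    ∀ d : ℕ, ∀ i j : ZMod n, rk j = rk i + d →
      (d : ℤ) ≤ p j - p i ∧ p j - p i ≤ d * ((n : ℤ) - 1) := by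
  intro d
  induction d with
  | zero =>
    intro i j hij
    have : rk j = rk i := by omega
    have := h.rk_inj _ _ this
    subst this
    simp
  | succ d ih =>
    intro i j hij
    have hv : ∃ k, rk k = rk i + d := by
      apply h.rk_surj
      · have := h.rk_nonneg i; omega
      · have := h.rk_le j
        have : (d : ℤ) + 1 = ((d : ℤ) + 1) := rfl
        push_cast at hij
        omega
    obtain ⟨k, hk⟩ := hv
    have h1 := ih i k hk
    have h2 := h.chain k j (by push_cast at hij ⊢; omega)
    push_cast
    constructor <;> nlinarith [h1.1, h1.2, h2.1, h2.2]

/-- Real arithmetic, negative case. -/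
lemma arith_neg {r q : ℤ} {κ : ℝ} (hn : 3 ≤ n) (hκ1 : 1 < κ)
    (hκ2 : κ * ((n : ℝ) - 2) < (n : ℝ) - 1)
    (hr : r ≤ -2) (hq1 : 1 ≤ q) (hq2 : q + r ≤ -1) (h3 : 1 - (n : ℤ) ≤ r) :
    (r : ℝ) + κ * q < 0 := by
  have hN : (3 : ℝ) ≤ (n : ℝ) := by exact_mod_cast hn
  have hQ : (1 : ℝ) ≤ (q : ℝ) := by exact_mod_cast hq1
  have hR : (r : ℝ) ≤ -2 := by exact_mod_cast hr
  have hQR : (q : ℝ) + r ≤ -1 := by exact_mod_cast hq2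
  have h3' : 1 - (n : ℝ) ≤ (r : ℝ) := by exact_mod_cast h3
  have key : κ * q * ((n : ℝ) - 2) < ((n : ℝ) - 1) * q := by
    nlinarith
  nlinarith

/-- Real arithmetic, positive case. -/
lemma arith_pos {r q : ℤ} {κ : ℝ} (hn : 3 ≤ n) (hκ1 : 1 < κ)
    (hκ2 : κ * ((n : ℝ) - 2) < (n : ℝ) - 1)
    (hr : 1 ≤ r) (hrn : r ≤ (n : ℤ) - 1) (hq : q ≤ 0) (hqr : 1 ≤ q + r) :
    0 ≤ (r : ℝ) + κ * q := by
  have hN : (3 : ℝ) ≤ (n : ℝ) := by exact_mod_cast hn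
  have hQ : (q : ℝ) ≤ 0 := by exact_mod_cast hq
  have hR : (1 : ℝ) ≤ (r : ℝ) := by exact_mod_cast hr
  have hRn : (r : ℝ) ≤ (n : ℝ) - 1 := by exact_mod_cast hrn
  have hQR : (1 : ℝ) ≤ (q : ℝ) + r := by exact_mod_cast hqr
  have key : ((n : ℝ) - 1) * q ≤ κ * q * ((n : ℝ) - 2) := by
    nlinarith
  nlinarith

/-- The pointwise equivalence of firing conditions. -/
lemma point [NeZero n] (hn : 3 ≤ n) {κ : ℝ} (hκ1 : 1 < κ)
    (hκ2 : κ * ((n : ℝ) - 2) < (n : ℝ) - 1)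
    (rk p : ZMod n → ℤ) (h : GoodState n rk p) (i : ZMod n) :
    (udiff n κ rk p i < 0 ↔ rdiff n rk i < -1) := by
  have hnR : (0 : ℝ) < (n : ℝ) := by
    have : 0 < n := by omega
    exact_mod_cast this
  have hdvd : (n : ℤ) ∣ (1 - (p i - p (i - 1))) := by
    rw [← ZMod.intCast_zmod_eq_zero_iff_dvd]
    push_cast
    rw [h.p_res i, h.p_res (i - 1)]
    ring
  obtain ⟨q, hq⟩ := hdvd
  obtain ⟨r, hrdef⟩ : ∃ r : ℤ, rk i - rk (i - 1) = r := ⟨_, rfl⟩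
  have hudiff : udiff n κ rk p i = (r : ℝ) + κ * q := by
    unfold udiff
    rw [hrdef, hq]
    push_cast
    field_simp
  have hrdiff : rdiff n rk i = (r : ℝ) := by
    unfold rdiff; rw [hrdef]
  rw [hudiff, hrdiff]
  have hrne : r ≠ 0 := by
    intro h0
    have : rk i = rk (i - 1) := by omega
    exact sub_one_ne hn i (h.rk_inj _ _ this).symm
  have hrlb : 1 - (n : ℤ) ≤ r := by
    have := h.rk_nonneg i; have := h.rk_le (i - 1); omega
  have hrub : r ≤ (n : ℤ) - 1 := by
    have := h.rk_le i; have := h.rk_nonneg (i - 1); omega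
  have hn3 : (3 : ℤ) ≤ (n : ℤ) := by exact_mod_cast hn
  rcases lt_or_gt_of_ne hrne with hneg | hpos
  · -- r ≤ -1 : chain from i to i-1 with d = -r
    have htoNat : (((-r).toNat : ℤ)) = -r := Int.toNat_of_nonneg (by omega)
    have htel := tele rk p h (-r).toNat i (i - 1) (by omega)
    rw [htoNat] at htel
    obtain ⟨ht1, ht2⟩ := htel
    have hq1 : 1 ≤ q := by nlinarith
    have hq2 : q + r ≤ 0 := by nlinarith
    rcases eq_or_lt_of_le (show r ≤ -1 by omega) with h1 | h2
    · -- r = -1, q = 1 : both sides false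
      have hq' : q = 1 := by
        have : 1 - (p i - p (i - 1)) = (n : ℤ) * q := hq
        nlinarith
      rw [h1, hq']
      push_cast
      constructor
      · intro hc; linarith
      · intro hc; linarith
    · -- r ≤ -2 : both sides true
      have hr2 : r ≤ -2 := by omega
      have hq2' : q + r ≤ -1 := by
        by_contra hcon
        have h0 : q + r = 0 := by omega
        nlinarith
      constructor
      · intro _
        have : (r : ℝ) ≤ -2 := by exact_mod_cast hr2
        linarith
      · intro _
        exact arith_neg hn hκ1 hκ2 hr2 hq1 hq2' hrlb
  · -- r ≥ 1 : both sides false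
    have htoNat : ((r.toNat : ℤ)) = r := Int.toNat_of_nonneg (by omega)
    have htel := tele rk p h r.toNat (i - 1) i (by omega)
    rw [htoNat] at htel
    obtain ⟨ht1, ht2⟩ := htel
    have hq1 : q ≤ 0 := by nlinarith
    have hq2 : 1 ≤ q + r := by
      by_contra hcon
      have hc : q + r ≤ 0 := by omega
      nlinarith
    constructor
    · intro hc
      exfalso
      have := arith_pos hn hκ1 hκ2 (by omega) hrub hq1 hq2
      linarith
    · intro hc
      exfalso
      have : (1 : ℝ) ≤ (r : ℝ) := by exact_mod_cast (show (1 : ℤ) ≤ r by omega)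
      linarith

section step

variable [NeZero n]

/-- New rank function after firing `i`. -/
def rkStep (rk : ZMod n → ℤ) (i : ZMod n) : ZMod n → ℤ :=
  fun j => if j = i then rk (i - 1) else if j = i - 1 then rk i else rk j

/-- New position function after firing `i`. -/
def pStep (p : ZMod n → ℤ) (i : ZMod n) : ZMod n → ℤ :=
  fun j => if j = i then p (i - 1) + 1 else if j = i - 1 then p i - 1 else p j

lemma rkStep_at (rk : ZMod n → ℤ) (i : ZMod n) :
    rkStep rk i i = rk (i - 1) := by
  unfold rkStep; rw [if_pos rfl]

lemma rkStep_at_sub (hn : 3 ≤ n) (rk : ZMod n → ℤ) (i : ZMod n) :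
    rkStep rk i (i - 1) = rk i := by
  unfold rkStep; rw [if_neg (sub_one_ne hn i), if_pos rfl]

lemma rkStep_other (rk : ZMod n → ℤ) {i j : ZMod n} (h1 : j ≠ i) (h2 : j ≠ i - 1) :
    rkStep rk i j = rk j := by
  unfold rkStep; rw [if_neg h1, if_neg h2]

lemma pStep_at (p : ZMod n → ℤ) (i : ZMod n) :
    pStep p i i = p (i - 1) + 1 := by
  unfold pStep; rw [if_pos rfl]

lemma pStep_at_sub (hn : 3 ≤ n) (p : ZMod n → ℤ) (i : ZMod n) :
    pStep p i (i - 1) = p i - 1 := by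
  unfold pStep; rw [if_neg (sub_one_ne hn i), if_pos rfl]

lemma pStep_other (p : ZMod n → ℤ) {i j : ZMod n} (h1 : j ≠ i) (h2 : j ≠ i - 1) :
    pStep p i j = p j := by
  unfold pStep; rw [if_neg h1, if_neg h2]

lemma A_self (i : ZMod n) : A n i i = 2 := by
  unfold A; rw [if_pos rfl]

lemma A_add_one (hn : 3 ≤ n) (i : ZMod n) : A n i (i + 1) = -1 := by
  unfold A
  rw [if_neg (fun h => add_one_ne hn i h.symm), if_pos (Or.inl rfl)]

lemma A_sub_one (hn : 3 ≤ n) (i : ZMod n) : A n i (i - 1) = -1 := by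
  unfold A
  rw [if_neg (fun h => sub_one_ne hn i h.symm), if_pos (Or.inr rfl)]

lemma A_other (hn : 3 ≤ n) {i j : ZMod n} (h0 : j ≠ i) (h1 : j ≠ i + 1)
    (h2 : j ≠ i - 1) : A n i j = 0 := by
  unfold A
  rw [if_neg (fun h => h0 h.symm), if_neg (by tauto)]

lemma fire_rdiff (hn : 3 ≤ n) (rk : ZMod n → ℤ) (i : ZMod n) :
    fire n i (rdiff n rk) = rdiff n (rkStep rk i) := by
  have e1 : i - 1 ≠ i := sub_one_ne hn i
  have e2 : i - 1 - 1 ≠ i := sub_two_ne hn i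
  have e3 : i - 1 - 1 ≠ i - 1 := sub_one_ne hn (i - 1)
  have e4 : i + 1 ≠ i := add_one_ne hn i
  have e45 : i + 1 ≠ i - 1 := add_one_ne_sub_one hn i
  have e5 : i + 1 - 1 = i := by ring
  funext j
  show rdiff n rk j - (A n i j : ℝ) * rdiff n rk i = rdiff n (rkStep rk i) j
  unfold rdiff
  by_cases hji : j = i
  · subst hji
    rw [A_self, rkStep_at, rkStep_at_sub hn]
    push_cast; ring
  · by_cases hjm : j = i - 1
    · subst hjm
      rw [A_sub_one hn, rkStep_at_sub hn, rkStep_other rk e2 e3]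
      push_cast; ring
    · by_cases hjp : j = i + 1
      · subst hjp
        rw [A_add_one hn, e5, rkStep_at, rkStep_other rk e4 e45]
        push_cast; ring
      · have j1 : j - 1 ≠ i := fun hh => hjp (by rw [← hh]; ring)
        have j2 : j - 1 ≠ i - 1 := fun hh => hji (by
          have : j - 1 + 1 = i - 1 + 1 := by rw [hh]
          simpa using this)
        rw [A_other hn hji hjp hjm, rkStep_other rk hji hjm, rkStep_other rk j1 j2]
        push_cast; ring

lemma fire_udiff (hn : 3 ≤ n) (κ : ℝ) (rk p : ZMod n → ℤ) (i : ZMod n) :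
    fire n i (udiff n κ rk p) = udiff n κ (rkStep rk i) (pStep p i) := by
  have e1 : i - 1 ≠ i := sub_one_ne hn i
  have e2 : i - 1 - 1 ≠ i := sub_two_ne hn i
  have e3 : i - 1 - 1 ≠ i - 1 := sub_one_ne hn (i - 1)
  have e4 : i + 1 ≠ i := add_one_ne hn i
  have e45 : i + 1 ≠ i - 1 := add_one_ne_sub_one hn i
  have e5 : i + 1 - 1 = i := by ring
  funext j
  show udiff n κ rk p j - (A n i j : ℝ) * udiff n κ rk p i
      = udiff n κ (rkStep rk i) (pStep p i) j
  unfold udiff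
  by_cases hji : j = i
  · subst hji
    rw [A_self, rkStep_at, rkStep_at_sub hn, pStep_at, pStep_at_sub hn]
    push_cast; ring
  · by_cases hjm : j = i - 1
    · subst hjm
      rw [A_sub_one hn, rkStep_at_sub hn, rkStep_other rk e2 e3,
        pStep_at_sub hn, pStep_other p e2 e3]
      push_cast; ring
    · by_cases hjp : j = i + 1
      · subst hjp
        rw [A_add_one hn, e5, rkStep_at, rkStep_other rk e4 e45,
          pStep_at, pStep_other p e4 e45]
        push_cast; ring
      · have j1 : j - 1 ≠ i := fun hh => hjp (by rw [← hh]; ring)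
        have j2 : j - 1 ≠ i - 1 := fun hh => hji (by
          have : j - 1 + 1 = i - 1 + 1 := by rw [hh]
          simpa using this)
        rw [A_other hn hji hjp hjm, rkStep_other rk hji hjm, rkStep_other rk j1 j2,
          pStep_other p hji hjm, pStep_other p j1 j2]
        push_cast; ring

/-- From an integer relation between positions deduce a relation in `ZMod n`. -/
lemma res_eq {rk p : ZMod n → ℤ} (h : GoodState n rk p) {x y : ZMod n} {d : ℤ}
    (hd : p x - p y = d) : x - y = ((d : ℤ) : ZMod n) := by
  have := congrArg (fun z : ℤ => ((z : ℤ) : ZMod n)) hd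
  simp only [Int.cast_sub] at this
  rwa [h.p_res x, h.p_res y] at this

lemma cast_n_sub_one : (((n : ℤ) - 1 : ℤ) : ZMod n) = -1 := by
  push_cast
  simp

/-- Preservation of the invariant under a `(<-1)`-legal firing at `i`. -/
lemma good_step (hn : 3 ≤ n) (rk p : ZMod n → ℤ) (h : GoodState n rk p)
    (i : ZMod n) (hf : rk i + 2 ≤ rk (i - 1)) :
    GoodState n (rkStep rk i) (pStep p i) := by
  have e1 : i - 1 ≠ i := sub_one_ne hn i
  constructor
  · intro j; unfold rkStep; split_ifs <;> apply h.rk_nonneg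
  · intro j; unfold rkStep; split_ifs <;> apply h.rk_le
  · -- injectivity
    intro a b hab
    unfold rkStep at hab
    by_cases ha1 : a = i
    · rw [if_pos ha1] at hab
      by_cases hb1 : b = i
      · exact ha1.trans hb1.symm
      · rw [if_neg hb1] at hab
        by_cases hb2 : b = i - 1
        · exfalso
          rw [if_pos hb2] at hab
          exact e1 (h.rk_inj _ _ hab)
        · rw [if_neg hb2] at hab
          exact absurd (h.rk_inj _ _ hab).symm hb2
    · rw [if_neg ha1] at hab
      by_cases ha2 : a = i - 1
      · rw [if_pos ha2] at hab
        by_cases hb1 : b = i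
        · exfalso
          rw [if_pos hb1] at hab
          exact e1 (h.rk_inj _ _ hab).symm
        · rw [if_neg hb1] at hab
          by_cases hb2 : b = i - 1
          · exact ha2.trans hb2.symm
          · rw [if_neg hb2] at hab
            exact absurd (h.rk_inj _ _ hab).symm hb1
      · rw [if_neg ha2] at hab
        by_cases hb1 : b = i
        · rw [if_pos hb1] at hab
          exact absurd (h.rk_inj _ _ hab) ha2
        · rw [if_neg hb1] at hab
          by_cases hb2 : b = i - 1
          · rw [if_pos hb2] at hab
            exact absurd (h.rk_inj _ _ hab) ha1
          · rw [if_neg hb2] at hab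
            exact h.rk_inj _ _ hab
  · -- surjectivity
    intro v hv1 hv2
    obtain ⟨j, hj⟩ := h.rk_surj v hv1 hv2
    by_cases hji : j = i
    · exact ⟨i - 1, by rw [rkStep_at_sub hn, ← hji, hj]⟩
    · by_cases hjm : j = i - 1
      · exact ⟨i, by rw [rkStep_at, ← hjm, hj]⟩
      · exact ⟨j, by rw [rkStep_other rk hji hjm, hj]⟩
  · -- residues
    intro j
    by_cases hji : j = i
    · rw [hji, pStep_at]
      push_cast
      rw [h.p_res (i - 1)]
      ring
    · by_cases hjm : j = i - 1
      · rw [hjm, pStep_at_sub hn]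
        push_cast
        rw [h.p_res i]
      · rw [pStep_other p hji hjm]
        exact h.p_res j
  · -- chain condition
    intro a b hab
    by_cases ha1 : a = i
    · rw [ha1] at hab ⊢
      by_cases hb1 : b = i
      · rw [hb1] at hab; omega
      · by_cases hb2 : b = i - 1
        · rw [hb2] at hab ⊢
          rw [rkStep_at_sub hn, rkStep_at] at hab
          omega
        · rw [rkStep_other rk hb1 hb2, rkStep_at] at hab
          have hc := h.chain (i - 1) b hab
          rw [pStep_other p hb1 hb2, pStep_at]
          have hne : p b - p (i - 1) ≠ 1 := by
            intro hd
            have := res_eq h hd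
            simp only [Int.cast_one] at this
            exact hb1 (by linear_combination this)
          omega
    · by_cases ha2 : a = i - 1
      · rw [ha2] at hab ⊢
        by_cases hb1 : b = i
        · rw [hb1] at hab ⊢
          rw [rkStep_at, rkStep_at_sub hn] at hab
          omega
        · by_cases hb2 : b = i - 1
          · rw [hb2] at hab; omega
          · rw [rkStep_other rk hb1 hb2, rkStep_at_sub hn] at hab
            have hc := h.chain i b hab
            rw [pStep_other p hb1 hb2, pStep_at_sub hn]
            have hne : p b - p i ≠ (n : ℤ) - 1 := by
              intro hd
              have := res_eq h hd
              rw [cast_n_sub_one] at this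
              exact hb2 (by linear_combination this)
            omega
      · rw [rkStep_other rk ha1 ha2] at hab
        by_cases hb1 : b = i
        · rw [hb1] at hab ⊢
          rw [rkStep_at] at hab
          have hc := h.chain a (i - 1) hab
          rw [pStep_at, pStep_other p ha1 ha2]
          have hne : p (i - 1) - p a ≠ (n : ℤ) - 1 := by
            intro hd
            have := res_eq h hd
            rw [cast_n_sub_one] at this
            exact ha1 (by linear_combination -this)
          omega
        · by_cases hb2 : b = i - 1
          · rw [hb2] at hab ⊢
            rw [rkStep_at_sub hn] at hab
            have hc := h.chain a i hab
            rw [pStep_at_sub hn, pStep_other p ha1 ha2]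
            have hne : p i - p a ≠ 1 := by
              intro hd
              have := res_eq h hd
              simp only [Int.cast_one] at this
              exact ha2 (by linear_combination -this)
            omega
          · rw [rkStep_other rk hb1 hb2] at hab
            rw [pStep_other p ha1 ha2, pStep_other p hb1 hb2]
            exact h.chain a b hab

/-- The key induction. -/
lemma key (hn : 3 ≤ n) {κ : ℝ} (hκ1 : 1 < κ)
    (hκ2 : κ * ((n : ℝ) - 2) < (n : ℝ) - 1) :
    ∀ l : List (ZMod n), ∀ rk p : ZMod n → ℤ, GoodState n rk p →
      (IsPlay n 0 (udiff n κ rk p) l ↔ IsPlay n (-1) (rdiff n rk) l) := by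
  intro l
  induction l with
  | nil => intro rk p _; simp [IsPlay]
  | cons i l ih =>
    intro rk p hgood
    simp only [IsPlay]
    have hpt := point hn hκ1 hκ2 rk p hgood i
    have hfq : rdiff n rk i < -1 → rk i + 2 ≤ rk (i - 1) := by
      intro hR
      have : ((rk i - rk (i - 1) : ℤ) : ℝ) < ((-1 : ℤ) : ℝ) := by
        unfold rdiff at hR; push_cast; push_cast at hR; linarith
      have h2 : rk i - rk (i - 1) < -1 := by exact_mod_cast this
      omega
    constructor
    · rintro ⟨h1, h2⟩
      have hR := hpt.mp h1
      refine ⟨hR, ?_⟩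
      have hstep := good_step hn rk p hgood i (hfq hR)
      rw [fire_rdiff hn]
      apply (ih (rkStep rk i) (pStep p i) hstep).mp
      rwa [fire_udiff hn κ rk p i] at h2
    · rintro ⟨h1, h2⟩
      have hU := hpt.mpr h1
      refine ⟨hU, ?_⟩
      have hstep := good_step hn rk p hgood i (hfq h1)
      rw [fire_udiff hn κ rk p i]
      apply (ih (rkStep rk i) (pStep p i) hstep).mpr
      rwa [fire_rdiff hn] at h2

end step

section initial

variable [NeZero n]

/-- Initial rank (= position) function. -/
def rk0 (n : ℕ) [NeZero n] : ZMod n → ℤ := fun i => (ZMod.val i : ℤ)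

lemma val_sub_one (hn : 3 ≤ n) {j : ZMod n} (hj : j ≠ 0) :
    ((j - 1).val : ℤ) = (j.val : ℤ) - 1 := by
  have hpos : 1 ≤ j.val := by
    rcases Nat.eq_zero_or_pos j.val with h0 | h1
    · exact absurd ((ZMod.val_eq_zero j).mp h0) hj
    · exact h1
  have hlt : j.val - 1 < n := by
    have := ZMod.val_lt j
    omega
  have hcast : j - 1 = (((j.val - 1 : ℕ) : ZMod n)) := by
    rw [Nat.cast_sub hpos, ZMod.natCast_zmod_val]
    push_cast
    ring
  rw [hcast, ZMod.val_cast_of_lt hlt]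
  push_cast [Nat.cast_sub hpos]
  ring

lemma val_neg_one' (hn : 3 ≤ n) : ((((0 : ZMod n) - 1)).val : ℤ) = (n : ℤ) - 1 := by
  have h1 : ((0 : ZMod n) - 1) = (((n - 1 : ℕ) : ZMod n)) := by
    rw [Nat.cast_sub (by omega : 1 ≤ n), ZMod.natCast_self]
    push_cast
    ring
  rw [h1, ZMod.val_cast_of_lt (by omega : n - 1 < n)]
  push_cast [Nat.cast_sub (by omega : 1 ≤ n)]
  ring

lemma good0 (hn : 3 ≤ n) : GoodState n (rk0 n) (rk0 n) := by
  constructor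
  · intro i; exact Int.natCast_nonneg _
  · intro i
    have := ZMod.val_lt i
    unfold rk0
    omega
  · intro i j hij
    unfold rk0 at hij
    have : i.val = j.val := by exact_mod_cast hij
    rw [← ZMod.natCast_zmod_val i, ← ZMod.natCast_zmod_val j, this]
  · intro v hv1 hv2
    refine ⟨((v.toNat : ℕ) : ZMod n), ?_⟩
    unfold rk0
    rw [ZMod.val_cast_of_lt (by omega : v.toNat < n)]
    omega
  · intro i
    unfold rk0
    push_cast
    exact ZMod.natCast_zmod_val i
  · intro i j hij
    unfold rk0 at hij ⊢
    have h1 := ZMod.val_lt j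
    have h2 := ZMod.val_lt i
    omega

lemma rho_eq (hn : 3 ≤ n) : rho n 0 = rdiff n (rk0 n) := by
  funext j
  unfold rho rdiff rk0
  by_cases hj : j = 0
  · subst hj
    rw [if_pos rfl, ZMod.val_zero, val_neg_one' hn]
    push_cast
    ring
  · rw [if_neg hj, val_sub_one hn hj]
    push_cast
    ring

lemma ukappa_eq (hn : 3 ≤ n) (κ : ℝ) : ukappa n κ = udiff n κ (rk0 n) (rk0 n) := by
  have hnR : ((n : ℝ)) ≠ 0 := by
    have : 0 < n := by omega
    positivity
  funext j
  unfold ukappa udiff rk0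
  by_cases hj : j = 0
  · subst hj
    rw [if_pos rfl, ZMod.val_zero, val_neg_one' hn]
    push_cast
    field_simp
    ring
  · rw [if_neg hj, val_sub_one hn hj]
    push_cast
    field_simp
    ring

end initial

end AffinePlayAux

theorem legal_play_iff_lt_neg_one_play (n : ℕ) [NeZero n] (hn : 3 ≤ n)
    (κ : ℝ) (hκ1 : 1 < κ) (hκ2 : κ < 1 + 1 / ((n : ℝ) - 2)) :
    ∀ l : List (ZMod n), IsPlay n 0 (ukappa n κ) l ↔ IsPlay n (-1) (rho n 0) l := by
  have hn2 : (0 : ℝ) < (n : ℝ) - 2 := by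
    have : (3 : ℝ) ≤ (n : ℝ) := by exact_mod_cast hn
    linarith
  have hκ2' : κ * ((n : ℝ) - 2) < (n : ℝ) - 1 := by
    have := mul_lt_mul_of_pos_right hκ2 hn2
    rw [add_mul, one_mul, div_mul_cancel₀ _ (ne_of_gt hn2)] at this
    linarith
  intro l
  rw [AffinePlayAux.rho_eq hn, AffinePlayAux.ukappa_eq hn κ]
  exact AffinePlayAux.key hn hκ1 hκ2' l (AffinePlayAux.rk0 n) (AffinePlayAux.rk0 n)
    (AffinePlayAux.good0 hn)
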